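/- Let $U_g^{n-g}$ be the unicyclic graph of order $n = q^2 + r$ ($1 \le r \le 2q+1$) obtained from a cycle of length $g$ by attaching a path of order $n-g$ at one vertex. If $g \ge q^2 + 1$, then $b(U_g^{n-g}) \ge q+1$. -/

import Mathlib

open SimpleGraph Finset


section helpers
variable {V : Type*} {G : SimpleGraph V}

lemma edist_cast (hconn : G.Connected) (u v : V) :
    G.edist u v = (G.dist u v : ℕ∞) := by
  have h : G.edist u v ≠ ⊤ := edist_ne_top_iff_reachable.mpr (hconn u v)
  simp [SimpleGraph.dist, ENat.coe_toNat h]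

lemma dist_getVert_le (hconn : G.Connected) {u v : V} (p : G.Walk u v) (i : ℕ) :
    G.dist u (p.getVert i) ≤ i := by
  induction i with
  | zero => simp [Walk.getVert_zero]
  | succ i ih =>
    by_cases h : i < p.length
    · obtain ⟨q, hq⟩ := (hconn u (p.getVert i)).exists_walk_length_eq_dist
      have hadj := p.adj_getVert_succ h
      have := SimpleGraph.dist_le (q.concat hadj)
      rw [Walk.length_concat, hq] at this
      omega
    · rw [p.getVert_of_length_le (by omega : p.length ≤ i + 1),
        ← p.getVert_of_length_le (by omega : p.length ≤ i)]
      omega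

lemma dist_getVert_right_le (hconn : G.Connected) {u v : V} (p : G.Walk u v) {j : ℕ}
    (hj : j ≤ p.length) : G.dist (p.getVert j) v ≤ p.length - j := by
  have h := dist_getVert_le hconn p.reverse (p.length - j)
  rw [Walk.getVert_reverse] at h
  have hidx : p.length - (p.length - j) = j := by omega
  rw [hidx] at h
  rwa [SimpleGraph.dist_comm]

lemma exists_adj_dist (hconn : G.Connected) {v u : V} {s : ℕ} (h : G.dist v u = s + 1) :
    ∃ w, G.Adj w u ∧ G.dist v w = s := by
  obtain ⟨p, hp⟩ := (hconn v u).exists_walk_length_eq_dist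
  rw [h] at hp
  refine ⟨p.getVert s, ?_, ?_⟩
  · have := p.adj_getVert_succ (i := s) (by omega)
    rw [show s + 1 = p.length from hp.symm, p.getVert_length] at this
    exact this
  · have h1 : G.dist v (p.getVert s) ≤ s := dist_getVert_le hconn p s
    have h2 : G.dist (p.getVert s) u ≤ 1 := by
      have := dist_getVert_right_le hconn p (by omega : s ≤ p.length)
      omega
    have h3 := hconn.dist_triangle (u := v) (v := p.getVert s) (w := u)
    omega

lemma walk_closed {C : Set V} (hcl : ∀ c ∈ C, ∀ d, G.Adj c d → d ∈ C)
    {u v : V} (p : G.Walk u v) (hu : u ∈ C) : v ∈ C := by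
  induction p with
  | nil => exact hu
  | cons h q ih => exact ih (hcl _ hu _ h)

lemma walk_pass {C : Set V} {x : V} (hC : ∀ c ∈ C, c ≠ x → ∀ d, G.Adj c d → d ∈ C)
    {u v : V} (p : G.Walk u v) (hu : u ∉ C) (hv : v ∈ C) : x ∈ p.support := by
  induction p with
  | nil => exact absurd hv hu
  | @cons a b c h q ih =>
    by_cases hb : b ∈ C
    · by_cases hbx : b = x
      · subst hbx; simp [Walk.support_cons, q.start_mem_support]
      · exact absurd (hC b hb hbx a h.symm) hu
    · simp [Walk.support_cons, ih hb hv]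

lemma dist_out [DecidableEq V] (hconn : G.Connected) {C : Set V} {x : V}
    (hC : ∀ c ∈ C, c ≠ x → ∀ d, G.Adj c d → d ∈ C)
    {u v : V} (hu : u ∉ C) (hv : v ∈ C) : G.dist x v ≤ G.dist u v := by
  obtain ⟨p, hp⟩ := (hconn u v).exists_walk_length_eq_dist
  have hx : x ∈ p.support := walk_pass hC p hu hv
  calc G.dist x v ≤ (p.dropUntil x hx).length := SimpleGraph.dist_le _
    _ ≤ p.length := Walk.length_dropUntil_le p hx
    _ = G.dist u v := hp

lemma support_eq_map_getVert {u v : V} (p : G.Walk u v) :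
    p.support = (List.range (p.length + 1)).map p.getVert := by
  induction p with
  | nil => simp [Walk.support_nil, Walk.getVert]
  | @cons a b c h q ih =>
    rw [Walk.support_cons, Walk.length_cons, List.range_succ_eq_map]
    simp only [List.map_cons, Walk.getVert_zero, List.map_map]
    rw [ih]
    rfl

end helpers

lemma cycle_cover_bound {V : Type*} [Fintype V] {G : SimpleGraph V} {x : V} {g n : ℕ}
    (hconn : G.Connected) (hcardV : Nat.card V = n) (hcardE : Nat.card G.edgeSet = n)
    (hgirth : G.girth = g) (hx3 : (G.neighborSet x).ncard = 3)
    (hx2 : ∀ v : V, v ≠ x → (G.neighborSet v).ncard ≤ 2) (hg3 : 1 ≤ g) :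
    ∃ C : Finset V, C.card = g ∧
      ∀ v t, (C.filter (fun c => G.dist v c ≤ t)).card ≤ 2 * t + 1 := by
  classical
  -- degrees
  have hdeg : ∀ v : V, G.degree v = (G.neighborSet v).ncard := by
    intro v
    rw [← card_neighborSet_eq_degree, Set.ncard_eq_toFinset_card', Set.toFinset_card]
  have hdegx : G.degree x = 3 := by rw [hdeg]; exact hx3
  have hdegv : ∀ v : V, v ≠ x → G.degree v ≤ 2 := fun v hv => (hdeg v) ▸ hx2 v hv
  -- the cycle
  have hnotacyclic : ¬ G.IsAcyclic := by
    intro h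
    rw [girth_eq_zero.mpr h] at hgirth
    omega
  obtain ⟨a, wlk, hcyc, hlen⟩ := exists_girth_eq_length.mpr hnotacyclic
  rw [hgirth] at hlen
  set f : ℕ → V := wlk.getVert with hf
  have hg : wlk.length = g := hlen.symm
  have hg3' : 3 ≤ g := hg ▸ hcyc.three_le_length
  have h0g : f 0 = f g := by
    rw [hf]; rw [wlk.getVert_zero, ← hg, wlk.getVert_length]
  have hadjsucc : ∀ i, i < g → G.Adj (f i) (f (i + 1)) := by
    intro i hi
    exact wlk.adj_getVert_succ (by omega)
  -- injectivity on [1, g]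
  have hinj : ∀ i ∈ Finset.Icc 1 g, ∀ j ∈ Finset.Icc 1 g, f i = f j → i = j := by
    have htail : wlk.support.tail = (List.range g).map (fun i => f (i + 1)) := by
      rw [support_eq_map_getVert, hg, List.range_succ_eq_map]
      simp [List.map_map, Function.comp]
      intro _ _; rfl
    have hnodup : wlk.support.tail.Nodup := hcyc.support_nodup
    rw [htail] at hnodup
    have hinj' := List.inj_on_of_nodup_map hnodup
    intro i hi j hj hij
    rw [Finset.mem_Icc] at hi hj
    have h1 : i - 1 ∈ List.range g := by rw [List.mem_range]; omega
    have h2 : j - 1 ∈ List.range g := by rw [List.mem_range]; omega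
    have hkey : f (i - 1 + 1) = f (j - 1 + 1) := by
      rw [show i - 1 + 1 = i by omega, show j - 1 + 1 = j by omega]
      exact hij
    have := hinj' h1 h2 hkey
    omega
  -- the cycle vertex set
  set C : Finset V := (Finset.Icc 1 g).image f with hC
  have hmemC : ∀ c, c ∈ C ↔ ∃ i, 1 ≤ i ∧ i ≤ g ∧ f i = c := by
    intro c; simp [hC, Finset.mem_image, Finset.mem_Icc]
    constructor
    · rintro ⟨i, ⟨h1, h2⟩, h3⟩; exact ⟨i, h1, h2, h3⟩
    · rintro ⟨i, h1, h2, h3⟩; exact ⟨i, ⟨h1, h2⟩, h3⟩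
  have hcardC : C.card = g := by
    rw [hC, Finset.card_image_of_injOn (fun i hi j hj => hinj i hi j hj), Nat.card_Icc]
    omega
  -- two distinct neighbors inside C for each cycle vertex
  have hnbrs : ∀ c ∈ C, ∃ d₁ d₂, d₁ ∈ C ∧ d₂ ∈ C ∧ d₁ ≠ d₂ ∧ G.Adj c d₁ ∧ G.Adj c d₂ := by
    intro c hc
    obtain ⟨i, hi1, hig, rfl⟩ := (hmemC c).mp hc
    set a₁ := if i = 1 then g else i - 1 with ha₁
    set a₂ := if i = g then 1 else i + 1 with ha₂
    have hma₁ : 1 ≤ a₁ ∧ a₁ ≤ g := by rw [ha₁]; split_ifs <;> omega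
    have hma₂ : 1 ≤ a₂ ∧ a₂ ≤ g := by rw [ha₂]; split_ifs <;> omega
    have hane : a₁ ≠ a₂ := by rw [ha₁, ha₂]; split_ifs <;> omega
    have hadj₁ : G.Adj (f i) (f a₁) := by
      have hd₁eq : f a₁ = f (i - 1) := by
        by_cases h1 : i = 1
        · rw [ha₁, if_pos h1, h1, ← h0g]
        · rw [ha₁, if_neg h1]
      rw [hd₁eq]
      have := hadjsucc (i - 1) (by omega)
      rw [show i - 1 + 1 = i by omega] at this
      exact this.symm
    have hadj₂ : G.Adj (f i) (f a₂) := by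
      by_cases h2 : i = g
      · have h01 := hadjsucc 0 (by omega)
        rw [h0g] at h01
        rw [ha₂, if_pos h2, h2]
        exact h01
      · have := hadjsucc i (by omega)
        rw [ha₂, if_neg h2]
        exact this
    refine ⟨f a₁, f a₂, (hmemC _).mpr ⟨a₁, hma₁.1, hma₁.2, rfl⟩,
      (hmemC _).mpr ⟨a₂, hma₂.1, hma₂.2, rfl⟩, ?_, hadj₁, hadj₂⟩
    intro h
    exact hane (hinj a₁ (Finset.mem_Icc.mpr hma₁) a₂ (Finset.mem_Icc.mpr hma₂) h)
  -- each c ∈ C has degree ≥ 2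
  have hdegC : ∀ c ∈ C, 2 ≤ G.degree c := by
    intro c hc
    obtain ⟨d₁, d₂, _, _, hne, ha1, ha2⟩ := hnbrs c hc
    have : ({d₁, d₂} : Finset V) ⊆ G.neighborFinset c := by
      intro z hz
      simp only [Finset.mem_insert, Finset.mem_singleton] at hz
      rcases hz with rfl | rfl <;> simp [SimpleGraph.mem_neighborFinset, ha1, ha2]
    calc 2 = ({d₁, d₂} : Finset V).card := by rw [Finset.card_insert_of_notMem (by simpa), Finset.card_singleton]
      _ ≤ (G.neighborFinset c).card := Finset.card_le_card this
      _ = G.degree c := rfl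
  -- a vertex of degree ≤ 1 exists
  have hn : Fintype.card V = n := by rw [← Nat.card_eq_fintype_card, hcardV]
  obtain ⟨y, hyx, hy1⟩ : ∃ y, y ≠ x ∧ G.degree y ≤ 1 := by
    by_contra hcon
    push_neg at hcon
    have hall : ∀ v ∈ Finset.univ.erase x, G.degree v = 2 := by
      intro v hv
      have hvx := Finset.ne_of_mem_erase hv
      have := hcon v hvx
      have := hdegv v hvx
      omega
    have hsum := G.sum_degrees_eq_twice_card_edges
    have hE : G.edgeFinset.card = n := by
      rw [SimpleGraph.edgeFinset_card, ← Nat.card_eq_fintype_card]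
      exact hcardE
    rw [hE] at hsum
    have hsplit : ∑ v, G.degree v = G.degree x + ∑ v ∈ Finset.univ.erase x, G.degree v := by
      rw [← Finset.add_sum_erase _ _ (Finset.mem_univ x)]
    rw [Finset.sum_congr rfl hall, Finset.sum_const, smul_eq_mul] at hsplit
    rw [Finset.card_erase_of_mem (Finset.mem_univ x), Finset.card_univ, hn, hdegx] at hsplit
    have hng : g ≤ n := by
      calc g = C.card := hcardC.symm
        _ ≤ Fintype.card V := Finset.card_le_univ C
        _ = n := hn
    omega
  have hyC : y ∉ C := by
    intro hy
    have := hdegC y hy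
    omega
  -- all neighbors of non-x cycle vertices are in C
  have hNsub : ∀ c ∈ (C : Set V), c ≠ x → ∀ d, G.Adj c d → d ∈ (C : Set V) := by
    intro c hc hcx d hd
    obtain ⟨d₁, d₂, hd1, hd2, hne, ha1, ha2⟩ := hnbrs c (by simpa using hc)
    have hsub : ({d₁, d₂} : Finset V) ⊆ G.neighborFinset c := by
      intro z hz
      simp only [Finset.mem_insert, Finset.mem_singleton] at hz
      rcases hz with rfl | rfl <;> simp [SimpleGraph.mem_neighborFinset, ha1, ha2]
    have hcard2 : (G.neighborFinset c).card ≤ 2 := hdegv c hcx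
    have heq : ({d₁, d₂} : Finset V) = G.neighborFinset c := by
      apply Finset.eq_of_subset_of_card_le hsub
      rw [Finset.card_insert_of_notMem (by simpa), Finset.card_singleton]
      exact hcard2
    have : d ∈ ({d₁, d₂} : Finset V) := by rw [heq]; simpa [SimpleGraph.mem_neighborFinset]
    simp only [Finset.mem_insert, Finset.mem_singleton] at this
    rcases this with rfl | rfl <;> simpa using (by assumption)
  -- x is in C
  have hxC : x ∈ C := by
    by_contra hx
    have hcl : ∀ c ∈ (C : Set V), ∀ d, G.Adj c d → d ∈ (C : Set V) := by
      intro c hc d hd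
      exact hNsub c hc (fun h => hx (h ▸ (by simpa using hc))) d hd
    have hCne : C.Nonempty := Finset.card_pos.mp (by omega)
    obtain ⟨c0, hc0⟩ := hCne
    obtain ⟨p⟩ := hconn c0 y
    exact hyC (by simpa using walk_closed hcl p (by simpa using hc0))
  -- x has a neighbor outside C
  obtain ⟨pout, hpadj, hpout⟩ : ∃ p, G.Adj x p ∧ p ∉ C := by
    by_contra hcon
    push_neg at hcon
    have hcl : ∀ c ∈ (C : Set V), ∀ d, G.Adj c d → d ∈ (C : Set V) := by
      intro c hc d hd
      by_cases hcx : c = x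
      · subst hcx; simpa using hcon d hd
      · exact hNsub c hc hcx d hd
    obtain ⟨p⟩ := hconn x y
    exact hyC (by simpa using walk_closed hcl p (by simpa using hxC))
  -- every cycle vertex has at most 2 neighbors inside C
  have hNC : ∀ c ∈ C, (G.neighborFinset c ∩ C).card ≤ 2 := by
    intro c hc
    by_cases hcx : c = x
    · subst hcx
      obtain ⟨d₁, d₂, hd1, hd2, hne, ha1, ha2⟩ := hnbrs c hc
      have hsub : ({d₁, d₂, pout} : Finset V) ⊆ G.neighborFinset c := by
        intro z hz
        simp only [Finset.mem_insert, Finset.mem_singleton] at hz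
        rcases hz with rfl | rfl | rfl <;> simp [SimpleGraph.mem_neighborFinset, ha1, ha2, hpadj]
      have hp1 : pout ≠ d₁ := fun h => hpout (h ▸ hd1)
      have hp2 : pout ≠ d₂ := fun h => hpout (h ▸ hd2)
      have hcard3 : ({d₁, d₂, pout} : Finset V).card = 3 := by
        rw [Finset.card_insert_of_notMem (by simp [hne, hp1.symm]),
          Finset.card_insert_of_notMem (by simp [hp2.symm]), Finset.card_singleton]
      have heq : ({d₁, d₂, pout} : Finset V) = G.neighborFinset c := by
        apply Finset.eq_of_subset_of_card_le hsub
        rw [hcard3]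
        exact le_of_eq hdegx
      have hsub2 : G.neighborFinset c ∩ C ⊆ {d₁, d₂} := by
        intro z hz
        rw [Finset.mem_inter, ← heq] at hz
        obtain ⟨hz1, hz2⟩ := hz
        simp only [Finset.mem_insert, Finset.mem_singleton] at hz1 ⊢
        rcases hz1 with rfl | rfl | rfl
        · left; rfl
        · right; rfl
        · exact absurd hz2 hpout
      calc (G.neighborFinset c ∩ C).card ≤ ({d₁, d₂} : Finset V).card := Finset.card_le_card hsub2
        _ ≤ 2 := Finset.card_insert_le _ _ |>.trans (by simp)
    · calc (G.neighborFinset c ∩ C).card ≤ (G.neighborFinset c).card :=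
          Finset.card_le_card (Finset.inter_subset_left)
        _ ≤ 2 := hdegv c hcx
  -- the witness lemma: every cycle vertex at distance s+1 from v ∈ C has a C-neighbor at distance s
  have hwit : ∀ v ∈ C, ∀ u ∈ C, ∀ s : ℕ, G.dist v u = s + 1 →
      ∃ w, w ∈ G.neighborFinset u ∩ C ∧ G.dist v w = s := by
    intro v hv u hu s hdist
    obtain ⟨w, hadj, hw⟩ := exists_adj_dist hconn hdist
    refine ⟨w, ?_, hw⟩
    rw [Finset.mem_inter, SimpleGraph.mem_neighborFinset]
    refine ⟨hadj.symm, ?_⟩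
    by_contra hwC
    -- w ∉ C adjacent to u ∈ C forces u = x
    have hux : u = x := by
      by_contra hux
      exact hwC (by simpa using hNsub u (by simpa using hu) hux w hadj.symm)
    -- then dist x v ≤ dist w v = s but dist v u = dist v x = s+1
    have h1 := dist_out (G := G) hconn hNsub (u := w) (v := v) (by simpa using hwC) (by simpa using hv)
    have h2 : G.dist w v = G.dist v w := SimpleGraph.dist_comm
    have h3 : G.dist x v = G.dist v x := SimpleGraph.dist_comm
    rw [hux] at hdist
    rw [h3, hdist, h2, hw] at h1
    omega
  -- sphere bound for v ∈ C
  have hsphere : ∀ v ∈ C, ∀ s : ℕ, 1 ≤ s →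
      (C.filter (fun c => G.dist v c = s)).card ≤ 2 := by
    intro v hv s hs
    induction s with
    | zero => omega
    | succ s ih =>
      rcases Nat.eq_or_lt_of_le hs with hs1 | hs2
      · -- s + 1 = 1
        have hs0 : s = 0 := by omega
        subst hs0
        have hsub : C.filter (fun c => G.dist v c = 1) ⊆ G.neighborFinset v ∩ C := by
          intro c hc
          rw [Finset.mem_filter] at hc
          rw [Finset.mem_inter, SimpleGraph.mem_neighborFinset]
          exact ⟨(dist_eq_one_iff_adj.mp hc.2), hc.1⟩
        exact le_trans (Finset.card_le_card hsub) (hNC v hv)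
      · have hs' : 1 ≤ s := by omega
        have ihs := ih hs'
        -- A (s+1) ⊆ biUnion over A s of neighbors
        have hsub : C.filter (fun c => G.dist v c = s + 1) ⊆
            (C.filter (fun c => G.dist v c = s)).biUnion
              (fun w => G.neighborFinset w ∩ (C.filter (fun c => G.dist v c = s + 1))) := by
          intro u hu
          have hu' := hu
          rw [Finset.mem_filter] at hu'
          obtain ⟨w, hwmem, hwdist⟩ := hwit v hv u hu'.1 s hu'.2
          rw [Finset.mem_inter, SimpleGraph.mem_neighborFinset] at hwmem
          rw [Finset.mem_biUnion]
          refine ⟨w, by rw [Finset.mem_filter]; exact ⟨hwmem.2, hwdist⟩, ?_⟩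
          rw [Finset.mem_inter, SimpleGraph.mem_neighborFinset]
          exact ⟨hwmem.1.symm, hu⟩
        have hone : ∀ w ∈ C.filter (fun c => G.dist v c = s), 
            (G.neighborFinset w ∩ (C.filter (fun c => G.dist v c = s + 1))).card ≤ 1 := by
          intro w hw
          rw [Finset.mem_filter] at hw
          have hws : G.dist v w = (s - 1) + 1 := by omega
          obtain ⟨w', hw'mem, hw'dist⟩ := hwit v hv w hw.1 (s - 1) hws
          have hsub2 : G.neighborFinset w ∩ (C.filter (fun c => G.dist v c = s + 1)) ⊆
              (G.neighborFinset w ∩ C).erase w' := by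
            intro z hz
            rw [Finset.mem_inter, Finset.mem_filter] at hz
            rw [Finset.mem_erase, Finset.mem_inter]
            refine ⟨?_, hz.1, hz.2.1⟩
            intro hzw'
            subst hzw'
            omega
          calc (G.neighborFinset w ∩ (C.filter (fun c => G.dist v c = s + 1))).card
              ≤ ((G.neighborFinset w ∩ C).erase w').card := Finset.card_le_card hsub2
            _ = (G.neighborFinset w ∩ C).card - 1 := Finset.card_erase_of_mem hw'mem
            _ ≤ 1 := by have := hNC w hw.1; omega
        calc (C.filter (fun c => G.dist v c = s + 1)).card
            ≤ ((C.filter (fun c => G.dist v c = s)).biUnion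
              (fun w => G.neighborFinset w ∩ (C.filter (fun c => G.dist v c = s + 1)))).card :=
              Finset.card_le_card hsub
          _ ≤ ∑ w ∈ C.filter (fun c => G.dist v c = s),
              (G.neighborFinset w ∩ (C.filter (fun c => G.dist v c = s + 1))).card :=
              Finset.card_biUnion_le
          _ ≤ ∑ _w ∈ C.filter (fun c => G.dist v c = s), 1 := Finset.sum_le_sum hone
          _ = (C.filter (fun c => G.dist v c = s)).card := by simp
          _ ≤ 2 := ihs
  -- ball bound for v ∈ C
  have hballC : ∀ v ∈ C, ∀ t : ℕ, (C.filter (fun c => G.dist v c ≤ t)).card ≤ 2 * t + 1 := by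
    intro v hv t
    have hsub : C.filter (fun c => G.dist v c ≤ t) ⊆
        (Finset.range (t + 1)).biUnion (fun s => C.filter (fun c => G.dist v c = s)) := by
      intro c hc
      rw [Finset.mem_filter] at hc
      rw [Finset.mem_biUnion]
      exact ⟨G.dist v c, Finset.mem_range.mpr (by omega), Finset.mem_filter.mpr ⟨hc.1, rfl⟩⟩
    have h0 : (C.filter (fun c => G.dist v c = 0)).card ≤ 1 := by
      have : C.filter (fun c => G.dist v c = 0) ⊆ {v} := by
        intro c hc
        rw [Finset.mem_filter] at hc
        rw [Finset.mem_singleton]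
        have := (hconn.dist_eq_zero_iff (u := v) (v := c)).mp hc.2
        exact this.symm
      simpa using Finset.card_le_card this
    calc (C.filter (fun c => G.dist v c ≤ t)).card
        ≤ ∑ s ∈ Finset.range (t + 1), (C.filter (fun c => G.dist v c = s)).card :=
          le_trans (Finset.card_le_card hsub) Finset.card_biUnion_le
      _ = (C.filter (fun c => G.dist v c = 0)).card +
          ∑ s ∈ Finset.Ico 1 (t + 1), (C.filter (fun c => G.dist v c = s)).card := by
          rw [Finset.range_eq_Ico, Finset.sum_eq_sum_Ico_succ_bot (by omega : (0:ℕ) < t + 1)]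
      _ ≤ 1 + ∑ s ∈ Finset.Ico 1 (t + 1), 2 := by
          exact Nat.add_le_add h0 (Finset.sum_le_sum
            (fun s hs => hsphere v hv s (Finset.mem_Ico.mp hs).1))
      _ ≤ 2 * t + 1 := by
          rw [Finset.sum_const, smul_eq_mul, Nat.card_Ico]
          omega
  -- general ball bound
  refine ⟨C, hcardC, fun v t => ?_⟩
  by_cases hv : v ∈ C
  · exact hballC v hv t
  · have hsub : C.filter (fun c => G.dist v c ≤ t) ⊆ C.filter (fun c => G.dist x c ≤ t) := by
      intro c hc
      rw [Finset.mem_filter] at hc ⊢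
      refine ⟨hc.1, ?_⟩
      have := dist_out (G := G) hconn hNsub (u := v) (v := c) (by simpa using hv)
        (by simpa using hc.1)
      omega
    exact le_trans (Finset.card_le_card hsub) (hballC x hxC t)

/-- A burning sequence of length `k` (0-indexed: `x 0, …, x (k-1)`):
the distance conditions and the covering condition. -/
def IsBurnSeq {V : Type*} (G : SimpleGraph V) (k : ℕ) (x : ℕ → V) : Prop :=
  (∀ i j : ℕ, i < j → j < k → (↑(j - i) : ℕ∞) ≤ G.edist (x i) (x j)) ∧
  (∀ v : V, ∃ i < k, G.edist (x i) v ≤ (↑(k - 1 - i) : ℕ∞))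

/-- The burning number of a graph: the least length of a burning sequence. -/
noncomputable def burningNumber {V : Type*} (G : SimpleGraph V) : ℕ :=
  sInf {k | ∃ x : ℕ → V, IsBurnSeq G k x}

/-- `G` is the unicyclic graph `U_g^{n-g}`: a cycle of length `g` with a pendant
path of order `n - g` attached at the vertex `x` (which has degree 3); all other
vertices have degree at most 2, the unique cycle has length `g`, and `G` has `n`
vertices and `n` edges. -/
def IsUOneArm {V : Type*} (G : SimpleGraph V) (x : V) (g n : ℕ) : Prop :=
  G.Connected ∧ Nat.card V = n ∧ Nat.card G.edgeSet = n ∧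
  G.girth = (g : ℕ∞) ∧
  (G.neighborSet x).ncard = 3 ∧
  ∀ v : V, v ≠ x → (G.neighborSet v).ncard ≤ 2

/-- For `U_g^{n-g}` of order `n = q² + r` with `1 ≤ r ≤ 2q + 1`: if `g ≥ q² + 1`,
then `b(U_g^{n-g}) ≥ q + 1`. -/
theorem stmt_12 {V : Type*} [Fintype V] (G : SimpleGraph V) (x : V) (g n q r : ℕ)
    (hnqr : n = q ^ 2 + r) (hr1 : 1 ≤ r) (hr2 : r ≤ 2 * q + 1)
    (hG : IsUOneArm G x g n) (hg : q ^ 2 + 1 ≤ g) :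
    q + 1 ≤ burningNumber G := by
  classical
  obtain ⟨hconn, hcardV, hcardE, hgirth', hx3, hx2⟩ := hG
  have hgirth : G.girth = g := by exact_mod_cast hgirth'
  obtain ⟨C, hcardC, hball⟩ := cycle_cover_bound hconn hcardV hcardE hgirth hx3 hx2 (by omega)
  have hkey : ∀ k (xs : ℕ → V), IsBurnSeq G k xs → q + 1 ≤ k := by
    intro k xs hbs
    obtain ⟨hd, hc⟩ := hbs
    by_contra hcon
    have hk : k ≤ q := by omega
    have hcover : C ⊆ (Finset.range k).biUnion
        (fun i => C.filter (fun c => G.dist (xs i) c ≤ k - 1 - i)) := by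
      intro c hcmem
      obtain ⟨i, hik, hi⟩ := hc c
      rw [edist_cast hconn, Nat.cast_le] at hi
      exact Finset.mem_biUnion.mpr ⟨i, Finset.mem_range.mpr hik,
        Finset.mem_filter.mpr ⟨hcmem, hi⟩⟩
    have hsum : ∑ i ∈ Finset.range k, (2 * (k - 1 - i) + 1) = k * k := by
      have h1 : ∑ i ∈ Finset.range k, (2 * (k - 1 - i) + 1)
          = ∑ i ∈ Finset.range k, (2 * i + 1) :=
        Finset.sum_range_reflect (fun i => 2 * i + 1) k
      have h2 : (∑ i ∈ Finset.range k, i) * 2 = k * (k - 1) := Finset.sum_range_id_mul_two k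
      have h3 : ∑ i ∈ Finset.range k, (2 * i + 1)
          = (∑ i ∈ Finset.range k, i) * 2 + k := by
        rw [Finset.sum_add_distrib, Finset.sum_const, ← Finset.mul_sum]
        simp [mul_comm]
      have h4 : k * (k - 1) + k = k * k := by
        cases k with
        | zero => simp
        | succ m => simp [Nat.succ_sub_one]; ring
      rw [h1, h3, h2, h4]
    have hgle : g ≤ k * k := by
      calc g = C.card := hcardC.symm
        _ ≤ ∑ i ∈ Finset.range k, (C.filter (fun c => G.dist (xs i) c ≤ k - 1 - i)).card :=
            le_trans (Finset.card_le_card hcover) Finset.card_biUnion_le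
        _ ≤ ∑ i ∈ Finset.range k, (2 * (k - 1 - i) + 1) :=
            Finset.sum_le_sum (fun i _ => hball _ _)
        _ = k * k := hsum
    have hkq : k * k ≤ q * q := Nat.mul_le_mul hk hk
    have hq2 : q ^ 2 = q * q := by ring
    omega
  have hne : ∃ k xs, IsBurnSeq G k xs := by
    obtain ⟨w, _, hw⟩ := Finset.exists_max_image Finset.univ (fun v => G.dist x v)
      ⟨x, Finset.mem_univ x⟩
    obtain ⟨p, hp⟩ := (hconn x w).exists_walk_length_eq_dist
    refine ⟨G.dist x w + 1, fun i => p.getVert i, ?_, ?_⟩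
    · intro i j hij hj
      beta_reduce
      rw [edist_cast hconn, Nat.cast_le]
      have hjlen : j ≤ p.length := by omega
      have h1 : G.dist (p.getVert j) w ≤ p.length - j := dist_getVert_right_le hconn p hjlen
      have h2 := hconn.dist_triangle (u := x) (v := p.getVert j) (w := w)
      have hdi : G.dist x (p.getVert i) ≤ i := dist_getVert_le hconn p i
      have h3 := hconn.dist_triangle (u := x) (v := p.getVert i) (w := p.getVert j)
      omega
    · intro v
      refine ⟨0, by omega, ?_⟩
      beta_reduce
      rw [Walk.getVert_zero, edist_cast hconn, Nat.cast_le]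
      have := hw v (Finset.mem_univ v)
      simpa using this
  rw [burningNumber]
  obtain ⟨k0, xs0, h0⟩ := hne
  have hmem : sInf {k | ∃ xs, IsBurnSeq G k xs} ∈ {k | ∃ xs, IsBurnSeq G k xs} :=
    Nat.sInf_mem ⟨k0, xs0, h0⟩
  obtain ⟨xs, hxs⟩ := hmem
  exact hkey _ xs hxs
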